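/- The minimum possible sum of vertex betweenness centralities over all connected simple graphs on N vertices with m edges equals C(N,2) - m, the number of non-adjacent vertex pairs. -/

import Mathlib

/-- `σ_st`: the number of shortest paths between `s` and `t`. -/
noncomputable def nsp {V : Type*} (G : SimpleGraph V) (s t : V) : ℕ :=
  Nat.card {p : G.Walk s t // p.IsPath ∧ p.length = G.dist s t}

/-- `σ_st(u)`: the number of shortest paths between `s` and `t` passing through `u`. -/
noncomputable def nspThru {V : Type*} (G : SimpleGraph V) (s t u : V) : ℕ :=
  Nat.card {p : G.Walk s t // p.IsPath ∧ p.length = G.dist s t ∧ u ∈ p.support}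

/-- The betweenness centrality of a vertex `u`. -/
noncomputable def btw {V : Type*} [Fintype V] [DecidableEq V]
    (G : SimpleGraph V) (u : V) : ℝ :=
  (1 / 2) * ∑ s : V, ∑ t : V,
    if s ≠ u ∧ t ≠ u ∧ s ≠ t then (nspThru G s t u : ℝ) / (nsp G s t : ℝ) else 0

open Finset

variable {V : Type*} [Fintype V] [DecidableEq V]

lemma nsp_pos {G : SimpleGraph V} {s t : V} (h : G.Reachable s t) : 0 < nsp G s t := by
  classical
  obtain ⟨p, hp, hl⟩ := h.exists_path_of_dist
  haveI : Nonempty {p : G.Walk s t // p.IsPath ∧ p.length = G.dist s t} := ⟨⟨p, hp, hl⟩⟩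
  haveI : Finite {p : G.Walk s t // p.IsPath ∧ p.length = G.dist s t} :=
    (SimpleGraph.fintypeSubtypePathLength G s t (G.dist s t)).finite
  exact Nat.card_pos

lemma sum_nspThru {G : SimpleGraph V} {s t : V} (hst : s ≠ t) :
    ∑ u ∈ univ \ {s, t}, nspThru G s t u = nsp G s t * (G.dist s t - 1) := by
  classical
  set d := G.dist s t with hd
  letI : Fintype {p : G.Walk s t // p.IsPath ∧ p.length = d} :=
    SimpleGraph.fintypeSubtypePathLength G s t d
  have hn : nsp G s t = Fintype.card {p : G.Walk s t // p.IsPath ∧ p.length = d} := by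
    rw [nsp, Nat.card_eq_fintype_card]
  have hthru : ∀ u : V, nspThru G s t u =
      (univ.filter fun q : {p : G.Walk s t // p.IsPath ∧ p.length = d} =>
        u ∈ q.1.support).card := by
    intro u
    rw [nspThru,
      Nat.card_congr (⟨fun p => ⟨⟨p.1, p.2.1, p.2.2.1⟩, p.2.2.2⟩,
        fun q => ⟨q.1.1, q.1.2.1, q.1.2.2, q.2⟩, fun _ => rfl, fun _ => rfl⟩ :
        {p : G.Walk s t // p.IsPath ∧ p.length = d ∧ u ∈ p.support} ≃
        {q : {p : G.Walk s t // p.IsPath ∧ p.length = d} // u ∈ q.1.support}),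
      Nat.card_eq_fintype_card, Fintype.card_subtype]
  calc ∑ u ∈ univ \ {s, t}, nspThru G s t u
      = ∑ u ∈ univ \ {s, t}, ∑ q : {p : G.Walk s t // p.IsPath ∧ p.length = d},
          (if u ∈ q.1.support then 1 else 0) := by
        refine Finset.sum_congr rfl fun u _ => ?_
        rw [hthru u, Finset.card_filter]
    _ = ∑ q : {p : G.Walk s t // p.IsPath ∧ p.length = d},
          ∑ u ∈ univ \ {s, t}, (if u ∈ q.1.support then 1 else 0) := Finset.sum_comm
    _ = ∑ _q : {p : G.Walk s t // p.IsPath ∧ p.length = d}, (d - 1) := by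
        refine Finset.sum_congr rfl fun q _ => ?_
        rw [← Finset.card_filter]
        have hset : (univ \ {s, t}).filter (fun u => u ∈ q.1.support)
            = q.1.support.toFinset \ {s, t} := by
          ext u; simp [and_comm]
        have hcard : q.1.support.toFinset.card = d + 1 := by
          rw [List.toFinset_card_of_nodup q.2.1.support_nodup,
            SimpleGraph.Walk.length_support, q.2.2]
        have hsub : ({s, t} : Finset V) ⊆ q.1.support.toFinset := by
          intro x hx
          simp only [mem_insert, mem_singleton] at hx
          rcases hx with rfl | rfl <;> simp
        rw [hset, Finset.card_sdiff_of_subset hsub, hcard,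
          Finset.card_insert_of_notMem (by simpa using hst), Finset.card_singleton]
        omega
    _ = nsp G s t * (d - 1) := by
        rw [Finset.sum_const, smul_eq_mul, Finset.card_univ, hn]

lemma pair_sum (G : SimpleGraph V) (hG : G.Connected) {s t : V} (hst : s ≠ t) :
    ∑ u : V, (if s ≠ u ∧ t ≠ u ∧ s ≠ t then (nspThru G s t u : ℝ) / (nsp G s t : ℝ) else 0)
      = (G.dist s t : ℝ) - 1 := by
  classical
  have hd1 : 1 ≤ G.dist s t := hG.pos_dist_of_ne hst
  have hn : 0 < nsp G s t := nsp_pos (hG.preconnected s t)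
  have hfil : univ.filter (fun u => s ≠ u ∧ t ≠ u ∧ s ≠ t) = univ \ {s, t} := by
    ext u
    simp only [mem_filter, mem_univ, true_and, mem_sdiff, mem_insert, mem_singleton]
    constructor
    · rintro ⟨h1, h2, -⟩
      rintro (rfl | rfl)
      · exact h1 rfl
      · exact h2 rfl
    · intro h
      exact ⟨fun he => h (Or.inl he.symm), fun he => h (Or.inr he.symm), hst⟩
  rw [← Finset.sum_filter, hfil, ← Finset.sum_div]
  rw [← Nat.cast_sum, sum_nspThru hst, Nat.cast_mul]
  rw [mul_comm, mul_div_assoc, div_self (by exact_mod_cast hn.ne'), mul_one,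
    Nat.cast_sub hd1, Nat.cast_one]

lemma total_sum (G : SimpleGraph V) (hG : G.Connected) :
    ∑ u : V, btw G u = (1/2) * ∑ s : V, ∑ t : V,
      (if s ≠ t then (G.dist s t : ℝ) - 1 else 0) := by
  classical
  unfold _root_.btw
  rw [← Finset.mul_sum]
  congr 1
  rw [Finset.sum_comm]
  refine Finset.sum_congr rfl fun s _ => ?_
  rw [Finset.sum_comm]
  refine Finset.sum_congr rfl fun t _ => ?_
  by_cases hst : s = t
  · subst hst
    simp
  · rw [if_pos hst, ← pair_sum G hG hst]

lemma count_nonadj (G : SimpleGraph V) [DecidableRel G.Adj] :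
    ∑ s : V, ∑ t : V, (if s ≠ t ∧ ¬ G.Adj s t then (1:ℝ) else 0)
      = (Fintype.card V : ℝ) * (Fintype.card V - 1) - 2 * G.edgeSet.ncard := by
  classical
  have h1 : ∀ s : V, ∑ t : V, (if s ≠ t ∧ ¬ G.Adj s t then (1:ℝ) else 0)
      = ∑ t : V, ((if s ≠ t then (1:ℝ) else 0) - (if G.Adj s t then (1:ℝ) else 0)) := by
    intro s
    refine Finset.sum_congr rfl fun t _ => ?_
    by_cases hst : s = t
    · subst hst; simp [G.loopless.irrefl s]
    · by_cases ha : G.Adj s t <;> simp [hst, ha]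
  have h2 : ∀ s : V, ∑ t : V, (if s ≠ t then (1:ℝ) else 0) = (Fintype.card V : ℝ) - 1 := by
    intro s
    rw [Finset.sum_boole]
    have : univ.filter (fun t => s ≠ t) = univ \ {s} := by
      ext t; simp [ne_comm, eq_comm]
    rw [this, Finset.card_sdiff_of_subset (by simp), Finset.card_univ, Finset.card_singleton,
      Nat.cast_sub (@Fintype.card_pos _ _ ⟨s⟩), Nat.cast_one]
  have h3 : ∀ s : V, ∑ t : V, (if G.Adj s t then (1:ℝ) else 0) = (G.degree s : ℝ) := by
    intro s
    rw [Finset.sum_boole]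
    congr 1
    rw [SimpleGraph.degree]
    congr 1
    ext t
    simp [SimpleGraph.mem_neighborFinset]
  calc ∑ s : V, ∑ t : V, (if s ≠ t ∧ ¬ G.Adj s t then (1:ℝ) else 0)
      = ∑ s : V, (((Fintype.card V : ℝ) - 1) - (G.degree s : ℝ)) := by
        refine Finset.sum_congr rfl fun s _ => ?_
        rw [h1 s, Finset.sum_sub_distrib, h2 s, h3 s]
    _ = (Fintype.card V : ℝ) * (Fintype.card V - 1) - 2 * G.edgeSet.ncard := by
        rw [Finset.sum_sub_distrib, Finset.sum_const, Finset.card_univ, nsmul_eq_mul,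
          ← Nat.cast_sum, SimpleGraph.sum_degrees_eq_twice_card_edges]
        have : G.edgeSet.ncard = G.edgeFinset.card := by
          rw [SimpleGraph.edgeFinset, Set.ncard_eq_toFinset_card']
        rw [this]
        push_cast
        ring

lemma main_eq (G : SimpleGraph V) [DecidableRel G.Adj] (hG : G.Connected)
    (h2 : ∀ s t : V, s ≠ t → ¬ G.Adj s t → G.dist s t = 2) :
    ∑ u : V, btw G u
      = (1/2) * ((Fintype.card V : ℝ) * (Fintype.card V - 1) - 2 * G.edgeSet.ncard) := by
  rw [total_sum G hG, ← count_nonadj G]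
  congr 1
  refine Finset.sum_congr rfl fun s _ => Finset.sum_congr rfl fun t _ => ?_
  by_cases hst : s = t
  · simp [hst]
  · rw [if_pos hst]
    by_cases ha : G.Adj s t
    · rw [SimpleGraph.dist_eq_one_iff_adj.mpr ha, if_neg (by tauto)]
      norm_num
    · rw [h2 s t hst ha, if_pos ⟨hst, ha⟩]
      norm_num

lemma main_ge (G : SimpleGraph V) [DecidableRel G.Adj] (hG : G.Connected) :
    (1/2) * ((Fintype.card V : ℝ) * (Fintype.card V - 1) - 2 * G.edgeSet.ncard)
      ≤ ∑ u : V, btw G u := by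
  rw [total_sum G hG, ← count_nonadj G]
  have h12 : (0:ℝ) ≤ 1/2 := by norm_num
  refine mul_le_mul_of_nonneg_left ?_ h12
  refine Finset.sum_le_sum fun s _ => Finset.sum_le_sum fun t _ => ?_
  by_cases hst : s = t
  · simp [hst]
  · rw [if_pos hst]
    by_cases ha : G.Adj s t
    · rw [if_neg (by tauto)]
      have : 1 ≤ G.dist s t := hG.pos_dist_of_ne hst
      have : (1:ℝ) ≤ (G.dist s t : ℝ) := by exact_mod_cast this
      linarith
    · rw [if_pos ⟨hst, ha⟩]
      have h0 : G.dist s t ≠ 1 := fun h => ha (SimpleGraph.dist_eq_one_iff_adj.mp h)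
      have h1 : 1 ≤ G.dist s t := hG.pos_dist_of_ne hst
      have : 2 ≤ G.dist s t := by omega
      have : (2:ℝ) ≤ (G.dist s t : ℝ) := by exact_mod_cast this
      linarith

lemma two_mul_choose_two (n : ℕ) : 2 * n.choose 2 = n * (n - 1) := by
  cases n with
  | zero => simp
  | succ k =>
    rw [Nat.choose_two_right]
    simp only [Nat.add_sub_cancel]
    exact Nat.mul_div_cancel'
      (show 2 ∣ (k + 1) * k by rw [mul_comm]; exact (Nat.even_mul_succ_self k).two_dvd)

section Construction

variable (N : ℕ) (hN : 2 ≤ N)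

lemma construction (m : ℕ) (hN : 2 ≤ N) (hm1 : N - 1 ≤ m) (hm2 : m ≤ N.choose 2) :
    ∃ H : SimpleGraph (Fin N), H.Connected ∧ H.edgeSet.ncard = m ∧
      (∀ s t : Fin N, s ≠ t → ¬ H.Adj s t → H.dist s t = 2) := by
  classical
  haveI : NeZero N := ⟨by omega⟩
  set star : Finset (Sym2 (Fin N)) := (univ.erase (0 : Fin N)).image (fun v => s((0:Fin N), v))
    with hstar
  set nonstar : Finset (Sym2 (Fin N)) :=
    univ.filter (fun e => ¬ e.IsDiag ∧ (0 : Fin N) ∉ e) with hnonstar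
  have hstar_card : star.card = N - 1 := by
    rw [hstar, Finset.card_image_of_injOn, Finset.card_erase_of_mem (mem_univ _),
      Finset.card_univ, Fintype.card_fin]
    intro a ha b hb hab
    simp only [Sym2.eq_iff] at hab
    rcases hab with ⟨-, h⟩ | ⟨h, h'⟩
    · exact h
    · exact absurd h' (by simpa using (Finset.mem_erase.mp ha).1)
  have hdisj : Disjoint star nonstar := by
    rw [Finset.disjoint_left]
    intro e he hne
    rw [hstar, Finset.mem_image] at he
    obtain ⟨v, -, rfl⟩ := he
    rw [hnonstar, Finset.mem_filter] at hne
    exact hne.2.2 (Sym2.mem_mk_left _ _)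
  have hunion : star ∪ nonstar = univ.filter (fun e => ¬ e.IsDiag) := by
    ext e
    induction e using Sym2.ind with
    | _ a b =>
      constructor
      · intro he
        rcases Finset.mem_union.mp he with he | he
        · obtain ⟨v, hv, hve⟩ := Finset.mem_image.mp he
          rw [Finset.mem_filter]
          refine ⟨mem_univ _, ?_⟩
          rw [← hve]
          simpa using Ne.symm (Finset.mem_erase.mp hv).1
        · rw [Finset.mem_filter]
          exact ⟨mem_univ _, ((Finset.mem_filter.mp he).2).1⟩
      · intro he
        have hd : ¬ (s(a, b)).IsDiag := (Finset.mem_filter.mp he).2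
        have hab : a ≠ b := by simpa using hd
        by_cases h0 : (0 : Fin N) ∈ s(a, b)
        · refine Finset.mem_union_left _ (Finset.mem_image.mpr ?_)
          rw [Sym2.mem_iff] at h0
          rcases h0 with rfl | rfl
          · exact ⟨b, Finset.mem_erase.mpr ⟨Ne.symm hab, mem_univ b⟩, rfl⟩
          · exact ⟨a, Finset.mem_erase.mpr ⟨hab, mem_univ a⟩, Sym2.eq_swap⟩
        · exact Finset.mem_union_right _ (Finset.mem_filter.mpr ⟨mem_univ _, hd, h0⟩)
  have hnd_card : (univ.filter (fun e : Sym2 (Fin N) => ¬ e.IsDiag)).card = N.choose 2 := by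
    rw [← Fintype.card_subtype, Sym2.card_subtype_not_diag, Fintype.card_fin]
  have hnonstar_card : m - (N - 1) ≤ nonstar.card := by
    have := Finset.card_union_of_disjoint hdisj
    rw [hunion, hnd_card, hstar_card] at this
    omega
  obtain ⟨S, hSsub, hScard⟩ := Finset.exists_subset_card_eq hnonstar_card
  set H : SimpleGraph (Fin N) := SimpleGraph.fromEdgeSet ↑(star ∪ S) with hH
  have hadj0 : ∀ v : Fin N, v ≠ 0 → H.Adj 0 v := by
    intro v hv
    rw [hH, SimpleGraph.fromEdgeSet_adj]
    refine ⟨?_, Ne.symm hv⟩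
    simp only [Finset.coe_union, Set.mem_union, Finset.mem_coe]
    exact Or.inl (Finset.mem_image.mpr ⟨v, Finset.mem_erase.mpr ⟨hv, mem_univ v⟩, rfl⟩)
  have hreach0 : ∀ v : Fin N, H.Reachable 0 v := by
    intro v
    by_cases hv : v = 0
    · subst hv; rfl
    · exact (hadj0 v hv).reachable
  have hconn : H.Connected := by
    rw [SimpleGraph.connected_iff]
    refine ⟨fun u v => ((hreach0 u).symm).trans (hreach0 v), ⟨0⟩⟩
  refine ⟨H, hconn, ?_, ?_⟩
  · have hnodiag : ∀ e ∈ star ∪ S, ¬ e.IsDiag := by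
      intro e he
      rcases Finset.mem_union.mp he with he | he
      · obtain ⟨v, hv, rfl⟩ := Finset.mem_image.mp he
        simpa using Ne.symm (Finset.mem_erase.mp hv).1
      · exact ((Finset.mem_filter.mp (hSsub he)).2).1
    have : H.edgeSet = ↑(star ∪ S) := by
      rw [hH, SimpleGraph.edgeSet_fromEdgeSet]
      ext e
      simp only [Set.mem_diff, Finset.mem_coe, Set.mem_setOf_eq]
      exact ⟨fun h => h.1, fun h => ⟨h, hnodiag e h⟩⟩
    rw [this, Set.ncard_coe_finset, Finset.card_union_of_disjoint
      (Finset.disjoint_of_subset_right hSsub hdisj), hstar_card, hScard]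
    omega
  · intro s t hst hadj
    have hs0 : s ≠ 0 := by
      rintro rfl
      exact hadj (hadj0 t (Ne.symm hst))
    have ht0 : t ≠ 0 := by
      rintro rfl
      exact hadj ((hadj0 s hst).symm)
    have hle : H.dist s t ≤ 2 := by
      have := SimpleGraph.dist_le (SimpleGraph.Walk.cons (hadj0 s hs0).symm
        (SimpleGraph.Walk.cons (hadj0 t ht0) SimpleGraph.Walk.nil))
      simpa using this
    have h0 : 1 ≤ H.dist s t := hconn.pos_dist_of_ne hst
    have h1 : H.dist s t ≠ 1 := fun h => hadj (SimpleGraph.dist_eq_one_iff_adj.mp h)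
    omega

end Construction

/-- The minimum possible sum of vertex betweenness centralities over all connected simple
graphs on `N` vertices with `m` edges equals `C(N,2) - m`. -/
theorem stmt_9 (N m : ℕ) (hN : 2 ≤ N) (hm1 : N - 1 ≤ m) (hm2 : m ≤ N.choose 2) :
    IsLeast {x : ℝ | ∃ G : SimpleGraph (Fin N), G.Connected ∧ G.edgeSet.ncard = m ∧
      x = ∑ u : Fin N, btw G u} ((N.choose 2 : ℝ) - (m : ℝ)) := by
  classical
  have key : (N : ℝ) * ((N : ℝ) - 1) = 2 * (N.choose 2 : ℝ) := by
    have h := two_mul_choose_two N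
    have h1 : ((N - 1 : ℕ) : ℝ) = (N : ℝ) - 1 := by
      rw [Nat.cast_sub (by omega), Nat.cast_one]
    rw [← h1, ← Nat.cast_mul, ← h]
    push_cast
    ring
  constructor
  · obtain ⟨H, hconn, hcard, h2⟩ := construction N m hN hm1 hm2
    refine ⟨H, hconn, hcard, ?_⟩
    rw [main_eq H hconn h2, hcard, Fintype.card_fin]
    linear_combination (-1/2) * key
  · rintro x ⟨G, hconn, hcard, rfl⟩
    have h := main_ge G hconn
    rw [hcard, Fintype.card_fin] at h
    have : (N.choose 2 : ℝ) - (m : ℝ)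
        = (1/2) * ((N : ℝ) * ((N : ℝ) - 1) - 2 * (m : ℝ)) := by
      linear_combination (-1/2) * key
    linarith
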